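/- The graph G with vertex set A₁ ∪ A₂ ∪ {o}, where A_i = {a_{i,1}, a_{i,2}, ...} and the edges are exactly: a_{1,j} adjacent to a_{2,j} and a_{1,j} adjacent to o for each natural number j, is a self-contained graph, and the induced subgraph on H = {a_{i,2^j} : j ∈ ℕ, i ∈ {1,2}} is a removable subgraph of G. -/

import Mathlib

universe u u'

/-- A graph is self-contained if it is isomorphic to a proper induced subgraph of itself. -/
def SelfContained {V : Type u} (G : SimpleGraph V) : Prop :=
  ∃ s : Set V, s ≠ Set.univ ∧ Nonempty (G ≃g G.induce s)

/-- A non-empty vertex set `H` induces a removable subgraph of `G` if `G \ H ≅ G`. -/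
def Removable {V : Type u} (G : SimpleGraph V) (H : Set V) : Prop :=
  H.Nonempty ∧ Nonempty (G ≃g G.induce Hᶜ)

/-- Two non-isomorphic graphs are strong twins if each is isomorphic to a proper
induced subgraph of the other. -/
def IsStrongTwin {V : Type u} {W : Type u'} (G : SimpleGraph V) (H : SimpleGraph W) : Prop :=
  ¬ Nonempty (G ≃g H) ∧
  (∃ s : Set W, s ≠ Set.univ ∧ Nonempty (G ≃g H.induce s)) ∧
  (∃ t : Set V, t ≠ Set.univ ∧ Nonempty (H ≃g G.induce t))

/-- `H` is a well-mannered removable subgraph of `G`. -/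
def WellMannered {V : Type u} (G : SimpleGraph V) (H : Set V) : Prop :=
  Removable G H ∧ ∀ f : G ≃g G.induce Hᶜ,
    ∃ α : G ≃g G,
      (fun v => (f v : V)) '' H = (fun v => α v) '' H ∧
      (fun v => α v) '' ((fun v => α v) '' H) = H ∧
      ∀ v ∉ H ∪ (fun v => (f v : V)) '' H, α v = v

/-- `G` is star-like if all of its removable subgraphs are well-mannered. -/
def StarLike {V : Type u} (G : SimpleGraph V) : Prop :=
  ∀ H : Set V, Removable G H → WellMannered G H

/-- `G` is ordinary star-like. -/
def OrdinaryStarLike {V : Type u} (G : SimpleGraph V) : Prop :=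
  StarLike G ∧ ∀ H : Set V, Removable G H →
    (∃ P : Set V, P.Nonempty ∧ P ⊆ H ∧ ¬ Removable G P) →
    ∃ P' : Set V, P'.Nonempty ∧ P' ⊂ H ∧ (H \ P').Finite

/-- A vertex `v` is twisted for `H`: it lies in some removable subgraph of `G`
but in no removable subgraph of `G \ H`. -/
def Twisted {V : Type u} (G : SimpleGraph V) (H : Set V) (v : V) : Prop :=
  (∃ P : Set V, Removable G P ∧ v ∈ P) ∧
  ¬ ∃ Q : Set ↥Hᶜ, Removable (G.induce Hᶜ) Q ∧ ∃ hv : v ∈ Hᶜ, (⟨v, hv⟩ : ↥Hᶜ) ∈ Q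

/-- The star-like example graph: vertices `a (i, j)` (as `Sum.inl (i, j)` with
`i : Fin 2`) plus a vertex `o = Sum.inr ()`; edges are exactly
`a (1, j) ~ a (2, j)` and `a (1, j) ~ o` (here `i = 0` plays the role of `1`). -/
def exampleStar : SimpleGraph ((Fin 2 × ℕ) ⊕ Unit) :=
  SimpleGraph.fromRel (fun v w =>
    match v, w with
    | Sum.inl (i, j), Sum.inl (i', j') => i = 0 ∧ i' = 1 ∧ j = j'
    | Sum.inl (i, _), Sum.inr _ => i = 0
    | _, _ => False)

def colSet (S : Set ℕ) : Set ((Fin 2 × ℕ) ⊕ Unit) :=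
  fun v => match v with | Sum.inl (_, j) => j ∈ S | Sum.inr _ => True

lemma key (S : Set ℕ) (e : ℕ ≃ S) :
    Nonempty (exampleStar ≃g exampleStar.induce (colSet S)) := by
  refine ⟨{
    toFun := fun v => match v with
      | Sum.inl (i, j) => ⟨Sum.inl (i, e j), (e j).2⟩
      | Sum.inr _ => ⟨Sum.inr (), trivial⟩
    invFun := fun v => match v with
      | ⟨Sum.inl (i, j), h⟩ => Sum.inl (i, e.symm ⟨j, h⟩)
      | ⟨Sum.inr _, _⟩ => Sum.inr ()
    left_inv := by rintro (⟨i, j⟩ | ⟨⟩) <;> simp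
    right_inv := by rintro ⟨(⟨i, j⟩ | ⟨⟩), h⟩ <;> simp
    map_rel_iff' := by
      rintro (⟨i, j⟩ | ⟨⟩) (⟨i', j'⟩ | ⟨⟩) <;>
        simp [exampleStar, SimpleGraph.comap, Subtype.ext_iff, Equiv.apply_eq_iff_eq] <;>
        simp [Subtype.val_inj, Equiv.apply_eq_iff_eq] }⟩

theorem stmt12_aux :
    (∃ s : Set ((Fin 2 × ℕ) ⊕ Unit), s ≠ Set.univ ∧ Nonempty (exampleStar ≃g exampleStar.induce s)) ∧
    ({v : (Fin 2 × ℕ) ⊕ Unit | ∃ (i : Fin 2) (j : ℕ), v = Sum.inl (i, 2 ^ j)}.Nonempty ∧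
      Nonempty (exampleStar ≃g exampleStar.induce
        {v : (Fin 2 × ℕ) ⊕ Unit | ∃ (i : Fin 2) (j : ℕ), v = Sum.inl (i, 2 ^ j)}ᶜ)) := by
  constructor
  · refine ⟨colSet {n | n ≠ 0}, ?_, key _
      ⟨fun n => ⟨n + 1, Nat.succ_ne_zero n⟩, fun m => m.1 - 1,
        fun n => by simp, fun ⟨m, hm⟩ => Subtype.ext (by have : m ≠ 0 := hm; simp; omega)⟩⟩
    intro h
    have : Sum.inl (0, 0) ∈ colSet {n | n ≠ 0} := h ▸ Set.mem_univ _
    exact this rfl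
  · refine ⟨⟨Sum.inl (0, 2 ^ 0), 0, 0, rfl⟩, ?_⟩
    set T : Set ℕ := {j | ¬∃ k, j = 2 ^ k} with hT
    have hinf : T.Infinite := by
      refine Set.infinite_of_injective_forall_mem (f := fun k : ℕ => 2 ^ (k + 1) + 1) ?_ ?_
      · intro a b hab
        simpa using (Nat.pow_right_injective (le_refl 2) (by simpa using hab) : a + 1 = b + 1)
      · rintro k ⟨m, hm⟩
        rcases Nat.eq_zero_or_pos m with rfl | hm'
        · simp at hm
        · have h1 : (2 ^ (k + 1) + 1) % 2 = 1 := by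
            simp [Nat.add_mod, Nat.pow_mod]
          have h2 : (2 ^ m) % 2 = 0 := by
            have : (2 : ℕ) ∣ 2 ^ m := dvd_pow_self 2 hm'.ne'
            omega
          omega
    haveI := hinf.to_subtype
    obtain ⟨e⟩ : Nonempty (ℕ ≃ T) := nonempty_equiv_of_countable
    have hset : {v : (Fin 2 × ℕ) ⊕ Unit | ∃ (i : Fin 2) (j : ℕ), v = Sum.inl (i, 2 ^ j)}ᶜ
        = colSet T := by
      ext (⟨i, j⟩ | ⟨⟩)
      · show (¬∃ (i' : Fin 2) (k : ℕ), Sum.inl (i, j) = Sum.inl (i', 2 ^ k)) ↔ (¬∃ k, j = 2 ^ k)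
        simp
      · show (¬∃ (i' : Fin 2) (k : ℕ), (Sum.inr () : (Fin 2 × ℕ) ⊕ Unit) = Sum.inl (i', 2 ^ k)) ↔ True
        simp
    rw [hset]
    exact key T e

/-- the graph above is self-contained, and the set
`H = {a (i, 2^j) : i ∈ {1,2}, j ∈ ℕ}` induces a removable subgraph. -/
theorem stmt12 :
    SelfContained exampleStar ∧
    Removable exampleStar
      {v : (Fin 2 × ℕ) ⊕ Unit | ∃ (i : Fin 2) (j : ℕ), v = Sum.inl (i, 2 ^ j)} := by
  exact stmt12_aux
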